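/- arXiv:1207.3384 — 3 statements merged into one kernel-verified Lean document; each statement's English description precedes it below -/
import Mathlib

section
/- Let C be a linear MDS code over a finite chain ring R (a code meeting the Singleton bound d_H(C) = n − log_{|R|}|C| + 1) of rank k and type 1^{k_0} γ^{k_1} ⋯ (γ^{e−1})^{k_{e−1}}. Then k_i = 0 for all i > 0; that is, C is a free R-module. -/
/-- The Hamming weight of a vector: the number of nonzero coordinates. -/
noncomputable def hammingWeight {R : Type*} [Zero R] {n : ℕ} (v : Fin n → R) : ℕ :=
  Nat.card {i : Fin n // v i ≠ 0}

/-- The minimum Hamming distance of a code: the minimum Hamming weight of a nonzero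
codeword. -/
noncomputable def minHammingDist {R : Type*} [CommRing R] {n : ℕ}
    (C : Submodule R (Fin n → R)) : ℕ :=
  sInf {d | ∃ v ∈ C, v ≠ 0 ∧ hammingWeight v = d}

/-- A linear MDS code over a finite chain ring `R` (a nonzero code meeting the Singleton
bound `d_H(C) = n − log_{|R|}|C| + 1`, i.e. `|C| = |R|^(n + 1 - d_H(C))`) is a free
`R`-module (all `k_i` with `i > 0` in its type vanish). -/
theorem mds_implies_free_over_chain_ring (R : Type*) [CommRing R] [Finite R] [Nontrivial R]
    (hchain : ∀ I J : Ideal R, I ≤ J ∨ J ≤ I)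
    (γ : R) (hmax : (Ideal.span {γ} : Ideal R).IsMaximal)
    (e : ℕ) (he0 : 0 < e) (he : γ ^ e = 0) (he' : γ ^ (e - 1) ≠ 0)
    (n : ℕ) (C : Submodule R (Fin n → R)) (hC : C ≠ ⊥)
    (hd : minHammingDist C ≤ n)
    (hMDS : Nat.card C = Nat.card R ^ (n + 1 - minHammingDist C)) :
    Module.Free R C := by
  classical
  obtain ⟨v₀, hv₀C, hv₀⟩ := Submodule.exists_mem_ne_zero_of_ne_bot hC
  set d := minHammingDist C with hdd
  have hne : {m | ∃ v ∈ C, v ≠ 0 ∧ hammingWeight v = m}.Nonempty :=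
    ⟨_, v₀, hv₀C, hv₀, rfl⟩
  have hmem : ∃ v ∈ C, v ≠ 0 ∧ hammingWeight v = d := by
    rw [hdd, minHammingDist]; exact Nat.sInf_mem hne
  have hlow : ∀ v ∈ C, v ≠ 0 → d ≤ hammingWeight v := by
    intro v hv hv0
    rw [hdd, minHammingDist]
    exact Nat.sInf_le ⟨v, hv, hv0, rfl⟩
  have hd1 : 1 ≤ d := by
    obtain ⟨w, hwC, hw0, hw⟩ := hmem
    obtain ⟨i, hi⟩ := Function.ne_iff.mp hw0
    have : 0 < hammingWeight w := by
      have : Nonempty {i : Fin n // w i ≠ 0} := ⟨⟨i, hi⟩⟩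
      exact Nat.card_pos
    omega
  set m := n + 1 - d with hmdef
  have hm : m ≤ n := by omega
  set φ : C →ₗ[R] (Fin m → R) :=
    (LinearMap.funLeft R R (fun j : Fin m => Fin.castLE hm j)).comp C.subtype with hφ
  have hinj : Function.Injective φ := by
    rw [injective_iff_map_eq_zero]
    intro x hx
    have hzero : ∀ j : Fin m, (x : Fin n → R) (Fin.castLE hm j) = 0 := by
      intro j
      have := congrFun hx j
      simpa [hφ, LinearMap.funLeft] using this
    have hv0 : (x : Fin n → R) = 0 := by
      by_contra hv
      have hsupp : ∀ i : Fin n, (x : Fin n → R) i ≠ 0 → m ≤ (i : ℕ) := by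
        intro i hi
        by_contra hlt
        push_neg at hlt
        have hcast : (Fin.castLE hm ⟨(i : ℕ), hlt⟩ : Fin n) = i := Fin.ext (by simp)
        exact hi (hcast ▸ hzero ⟨(i : ℕ), hlt⟩)
      have hcard : hammingWeight (x : Fin n → R) ≤ d - 1 := by
        have hginj : Function.Injective
            (fun i : {i : Fin n // (x : Fin n → R) i ≠ 0} =>
              (⟨((i : Fin n) : ℕ) - m, by
                have h1 := hsupp i i.2
                have h2 := (i : Fin n).isLt
                omega⟩ : Fin (d - 1))) := by
          intro a b hab
          have h1 := hsupp a a.2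
          have h2 := hsupp b b.2
          have := Fin.mk.injEq _ _ _ _ ▸ hab
          have hval : ((a : Fin n) : ℕ) - m = ((b : Fin n) : ℕ) - m := by
            simpa using congrArg Fin.val hab
          exact Subtype.ext (Fin.ext (by omega))
        calc hammingWeight (x : Fin n → R)
            ≤ Nat.card (Fin (d - 1)) := Nat.card_le_card_of_injective _ hginj
          _ = d - 1 := by simp
      have := hlow (x : Fin n → R) x.2 hv
      omega
    exact Subtype.ext hv0
  have hcardeq : Nat.card C = Nat.card (Fin m → R) := by
    rw [Nat.card_fun]
    simpa using hMDS
  have hbij : Function.Bijective φ :=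
    (Nat.bijective_iff_injective_and_card φ).mpr ⟨hinj, hcardeq⟩
  exact Module.Free.of_equiv (LinearEquiv.ofBijective φ hbij).symm
end

section
/- Let R be a finite chain ring with maximal ideal ⟨γ⟩, residue field K of characteristic p, and let λ be a unit of R with gcd(n,p) = 1. Then every prime ideal of R[x]/⟨x^n − λ⟩ is of the form ⟨π(x), γ⟩ where π(x) is a monic basic irreducible divisor of x^n − λ in R[x]; moreover each such ideal is maximal. -/
open Polynomial

lemma ker_polyMap_span {R : Type*} [CommRing R] (γ : R) :
    RingHom.ker (mapRingHom (Ideal.Quotient.mk (Ideal.span {γ}))) =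
      Ideal.span {(C γ : R[X])} := by
  rw [Polynomial.ker_mapRingHom, Ideal.mk_ker, Ideal.map_span, Set.image_singleton]

lemma dvd_of_map_eq_zero {R : Type*} [CommRing R] (γ : R) {x : R[X]}
    (h : x.map (Ideal.Quotient.mk (Ideal.span {γ})) = 0) : (C γ : R[X]) ∣ x := by
  rw [← Ideal.mem_span_singleton, ← ker_polyMap_span γ]
  simpa [RingHom.mem_ker] using h

lemma hensel_step {R : Type*} [CommRing R] [Nontrivial R] (γ : R)
    [Nontrivial (R ⧸ Ideal.span {γ})]
    {f a b : R[X]} {k : ℕ} (hk : 1 ≤ k) (ha : a.Monic)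
    (hco : IsCoprime (a.map (Ideal.Quotient.mk (Ideal.span {γ})))
      (b.map (Ideal.Quotient.mk (Ideal.span {γ}))))
    (hd : (C (γ ^ k) : R[X]) ∣ f - a * b) :
    ∃ a' b' : R[X], a'.Monic ∧
      a'.map (Ideal.Quotient.mk (Ideal.span {γ})) = a.map (Ideal.Quotient.mk (Ideal.span {γ})) ∧
      b'.map (Ideal.Quotient.mk (Ideal.span {γ})) = b.map (Ideal.Quotient.mk (Ideal.span {γ})) ∧
      (C (γ ^ (k + 1)) : R[X]) ∣ f - a' * b' := by
  set mk := Ideal.Quotient.mk (Ideal.span {γ}) with hmk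
  have hγ0 : mk γ = 0 := by
    rw [Ideal.Quotient.eq_zero_iff_mem]
    exact Ideal.mem_span_singleton_self γ
  have hmkγ : mk (γ ^ k) = 0 := by
    rw [Ideal.Quotient.eq_zero_iff_mem, Ideal.mem_span_singleton]
    exact dvd_pow_self γ (Nat.one_le_iff_ne_zero.mp hk)
  obtain ⟨h, hh⟩ := hd
  obtain ⟨u, v, huv⟩ := hco
  have hamonic : (a.map mk).Monic := ha.map mk
  set sb := (v * h.map mk) %ₘ (a.map mk) with hsb
  set q := (v * h.map mk) /ₘ (a.map mk) with hq
  have hdiv : sb + (a.map mk) * q = v * h.map mk := modByMonic_add_div _ _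
  set tb := u * h.map mk + (b.map mk) * q with htb
  have key : (a.map mk) * tb + (b.map mk) * sb = h.map mk := by
    have h1 : u * (a.map mk) + v * (b.map mk) = 1 := huv
    linear_combination (h.map mk) * h1 + (b.map mk) * hdiv
  have hsurj := Polynomial.map_surjective mk Ideal.Quotient.mk_surjective
  obtain ⟨s, hs, hsdeg⟩ := Polynomial.mem_lifts_and_degree_eq
    ((Polynomial.mem_lifts sb).2 (hsurj sb))
  obtain ⟨t, ht⟩ := hsurj tb
  have hwdvd : (C γ : R[X]) ∣ h - a * t - b * s := by
    apply dvd_of_map_eq_zero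
    rw [Polynomial.map_sub, Polynomial.map_sub, Polynomial.map_mul, Polynomial.map_mul,
      hs, ht]
    linear_combination - key
  have hsdeg' : s.degree < a.degree := by
    calc s.degree = sb.degree := hsdeg
      _ < (a.map mk).degree := degree_modByMonic_lt _ hamonic
      _ = a.degree := ha.degree_map mk
  refine ⟨a + C (γ ^ k) * s, b + C (γ ^ k) * t, ?_, ?_, ?_, ?_⟩
  · refine ha.add_of_left ?_
    refine lt_of_le_of_lt ?_ hsdeg'
    refine (degree_mul_le _ _).trans ?_
    calc (C (γ ^ k) : R[X]).degree + s.degree ≤ 0 + s.degree :=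
          add_le_add degree_C_le le_rfl
      _ = s.degree := zero_add _
  · simp [Polynomial.map_add, Polynomial.map_mul, hγ0, zero_pow (Nat.one_le_iff_ne_zero.mp hk)]
  · simp [Polynomial.map_add, Polynomial.map_mul, hγ0, zero_pow (Nat.one_le_iff_ne_zero.mp hk)]
  · obtain ⟨w, hw⟩ := hwdvd
    have hid : f - (a + C (γ ^ k) * s) * (b + C (γ ^ k) * t) =
        C (γ ^ k) * (C γ * w) - (C (γ ^ k) * C (γ ^ k)) * (s * t) := by
      linear_combination hh + C (γ ^ k : R) * hw
    rw [hid]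
    refine dvd_sub ?_ ?_
    · rw [pow_succ, C_mul]
      exact ⟨w, by ring⟩
    · rw [← C_mul, ← pow_add]
      refine Dvd.dvd.mul_right ?_ _
      exact map_dvd C (pow_dvd_pow γ (by omega))

lemma hensel_lift {R : Type*} [CommRing R] [Nontrivial R] (γ : R)
    [Nontrivial (R ⧸ Ideal.span {γ})]
    {e : ℕ} (he0 : 0 < e) (he : γ ^ e = 0)
    {f : R[X]} (hf : f.Monic) {a₀ b₀ : (R ⧸ Ideal.span {γ})[X]}
    (ha₀ : a₀.Monic) (hco : IsCoprime a₀ b₀)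
    (hfab : f.map (Ideal.Quotient.mk (Ideal.span {γ})) = a₀ * b₀) :
    ∃ a b : R[X], a.Monic ∧
      a.map (Ideal.Quotient.mk (Ideal.span {γ})) = a₀ ∧
      b.map (Ideal.Quotient.mk (Ideal.span {γ})) = b₀ ∧ f = a * b := by
  set mk := Ideal.Quotient.mk (Ideal.span {γ}) with hmk
  have hsurj := Polynomial.map_surjective mk Ideal.Quotient.mk_surjective
  have key : ∀ k, 1 ≤ k → ∃ a b : R[X], a.Monic ∧
      a.map mk = a₀ ∧ b.map mk = b₀ ∧ (C (γ ^ k) : R[X]) ∣ f - a * b := by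
    intro k hk
    induction k, hk using Nat.le_induction with
    | base =>
      obtain ⟨a, ha, _, hamonic⟩ := Polynomial.lifts_and_degree_eq_and_monic
        ((Polynomial.mem_lifts a₀).2 (hsurj a₀)) ha₀
      obtain ⟨b, hb⟩ := hsurj b₀
      refine ⟨a, b, hamonic, ha, hb, ?_⟩
      rw [pow_one]
      apply dvd_of_map_eq_zero
      rw [Polynomial.map_sub, Polynomial.map_mul, ha, hb, hfab, sub_self]
    | succ k hk ih =>
      obtain ⟨a, b, hamonic, ha, hb, hdvd⟩ := ih
      obtain ⟨a', b', ha'm, ha', hb', hdvd'⟩ := hensel_step γ hk hamonic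
        (by rw [ha, hb]; exact hco) hdvd
      exact ⟨a', b', ha'm, ha'.trans ha, hb'.trans hb, hdvd'⟩
  obtain ⟨a, b, hamonic, ha, hb, hdvd⟩ := key e he0
  rw [he, C_0] at hdvd
  exact ⟨a, b, hamonic, ha, hb, sub_eq_zero.mp (zero_dvd_iff.mp hdvd)⟩

lemma ker_phi_eq {R : Type*} [CommRing R] [Nontrivial R] (γ : R)
    (hmax : (Ideal.span {γ} : Ideal R).IsMaximal) {π : R[X]} (hπ : π.Monic) :
    RingHom.ker ((Ideal.Quotient.mk
        (Ideal.span {π.map (Ideal.Quotient.mk (Ideal.span {γ}))})).comp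
      (mapRingHom (Ideal.Quotient.mk (Ideal.span {γ})))) =
      Ideal.span {π, C γ} := by
  haveI := hmax
  letI : Field (R ⧸ Ideal.span {γ}) := Ideal.Quotient.field _
  set mk' := Ideal.Quotient.mk (Ideal.span {γ}) with hmk'
  apply le_antisymm
  · intro x hx
    have hx' : (π.map mk') ∣ x.map mk' := by
      rw [← Ideal.mem_span_singleton]
      rw [RingHom.mem_ker, RingHom.comp_apply, Ideal.Quotient.eq_zero_iff_mem] at hx
      exact hx
    have hxr : x %ₘ π + π * (x /ₘ π) = x := modByMonic_add_div x π
    have hrdvd : (π.map mk') ∣ (x %ₘ π).map mk' := by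
      have hmapeq : (x %ₘ π).map mk' = x.map mk' - (π.map mk') * ((x /ₘ π).map mk') := by
        rw [← Polynomial.map_mul, eq_sub_iff_add_eq, ← Polynomial.map_add, hxr]
      rw [hmapeq]
      exact dvd_sub hx' (Dvd.intro _ rfl)
    have hrdeg : ((x %ₘ π).map mk').degree < (π.map mk').degree := by
      calc ((x %ₘ π).map mk').degree ≤ (x %ₘ π).degree := degree_map_le
        _ < π.degree := degree_modByMonic_lt x hπ

        _ = (π.map mk').degree := (hπ.degree_map mk').symm
    have hr0 : (x %ₘ π).map mk' = 0 := eq_zero_of_dvd_of_degree_lt hrdvd hrdeg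
    have hr : (C γ : R[X]) ∣ x %ₘ π := dvd_of_map_eq_zero γ hr0
    rw [← hxr]
    refine Ideal.add_mem _ ?_ ?_
    · have hmem : x %ₘ π ∈ Ideal.span ({C γ} : Set R[X]) := Ideal.mem_span_singleton.mpr hr
      exact Ideal.span_mono (Set.singleton_subset_iff.mpr (by simp)) hmem
    · exact Ideal.mul_mem_right _ _ (Ideal.subset_span (Set.mem_insert _ _))
  · rw [Ideal.span_le]
    intro x hx
    rcases hx with h | h
    · subst h
      rw [SetLike.mem_coe, RingHom.mem_ker, RingHom.comp_apply, coe_mapRingHom,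
        Ideal.Quotient.eq_zero_iff_mem]
      exact Ideal.subset_span rfl
    · rw [Set.mem_singleton_iff] at h; subst h
      have hz : mk' γ = 0 := Ideal.Quotient.eq_zero_iff_mem.mpr (Ideal.subset_span rfl)
      rw [SetLike.mem_coe, RingHom.mem_ker, RingHom.comp_apply, coe_mapRingHom, map_C, hz,
        C_0, map_zero]

lemma span_pi_gamma_isMaximal {R : Type*} [CommRing R] [Nontrivial R] (γ : R)
    (hmax : (Ideal.span {γ} : Ideal R).IsMaximal) (lam : R) {n : ℕ} (hn : 0 < n)
    {π : R[X]} (hπ : π.Monic) (hdvd : π ∣ X ^ n - C lam)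
    (hirr : Irreducible (π.map (Ideal.Quotient.mk (Ideal.span {γ})))) :
    (Ideal.span {Ideal.Quotient.mk (Ideal.span {(X : R[X]) ^ n - C lam}) π,
      Ideal.Quotient.mk (Ideal.span {(X : R[X]) ^ n - C lam}) (C γ)}).IsMaximal := by
  haveI := hmax
  letI : Field (R ⧸ Ideal.span {γ}) := Ideal.Quotient.field _
  set mk' := Ideal.Quotient.mk (Ideal.span {γ}) with hmk'
  set I : Ideal R[X] := Ideal.span {(X : R[X]) ^ n - C lam} with hI
  haveI hπmax : (Ideal.span {π.map mk'}).IsMaximal :=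
    PrincipalIdealRing.isMaximal_of_irreducible hirr
  letI : Field ((R ⧸ Ideal.span {γ})[X] ⧸ Ideal.span {π.map mk'}) := Ideal.Quotient.field _
  set φ : R[X] →+* (R ⧸ Ideal.span {γ})[X] ⧸ Ideal.span {π.map mk'} :=
    (Ideal.Quotient.mk (Ideal.span {π.map mk'})).comp (mapRingHom mk') with hφ
  have hkerφ : RingHom.ker φ = Ideal.span {π, C γ} := ker_phi_eq γ hmax hπ
  have hle : I ≤ RingHom.ker φ := by
    rw [hI, Ideal.span_le, Set.singleton_subset_iff, hkerφ]
    obtain ⟨c, hc⟩ := hdvd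
    rw [SetLike.mem_coe, hc]
    exact Ideal.mul_mem_right _ _ (Ideal.subset_span (Set.mem_insert _ _))
  set ψ := Ideal.Quotient.lift I φ hle with hψ
  have hψsurj : Function.Surjective ψ := by
    intro y
    obtain ⟨x, hx⟩ := Ideal.Quotient.mk_surjective y
    obtain ⟨x', hx'⟩ := Polynomial.map_surjective mk' Ideal.Quotient.mk_surjective x
    exact ⟨Ideal.Quotient.mk I x', by
      rw [hψ]; show φ x' = y; rw [hφ, RingHom.comp_apply, coe_mapRingHom, hx', hx]⟩
  have hker : RingHom.ker ψ = Ideal.span {Ideal.Quotient.mk I π, Ideal.Quotient.mk I (C γ)} := by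
    rw [hψ, Ideal.ker_quotient_lift φ hle, hkerφ, Ideal.map_span, Set.image_insert_eq,
      Set.image_singleton]
  rw [← hker]
  exact RingHom.ker_isMaximal_of_surjective ψ hψsurj

/-- Over a finite chain ring `R` with maximal ideal `⟨γ⟩`, residue field of characteristic
`p`, a unit `λ` and `gcd(n,p) = 1`: every prime ideal of `R[x]/⟨x^n − λ⟩` is of the form
`⟨π(x), γ⟩` with `π` a monic basic irreducible divisor of `x^n − λ` in `R[x]`, and every
ideal of this form is maximal. -/
theorem prime_ideals_of_constacyclic_ambient (R : Type*) [CommRing R] [Finite R]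
    [Nontrivial R] (hchain : ∀ I J : Ideal R, I ≤ J ∨ J ≤ I)
    (γ : R) (hmax : (Ideal.span {γ} : Ideal R).IsMaximal)
    (e : ℕ) (he0 : 0 < e) (he : γ ^ e = 0) (he' : γ ^ (e - 1) ≠ 0)
    (p : ℕ) (hp : p = ringChar (R ⧸ Ideal.span {γ}))
    (lam : R) (hlam : IsUnit lam) (n : ℕ) (hn : 0 < n) (hcop : Nat.Coprime n p) :
    (∀ P : Ideal (Polynomial R ⧸ Ideal.span {(X : Polynomial R) ^ n - C lam}),
      P.IsPrime → ∃ π : Polynomial R, π.Monic ∧ π ∣ X ^ n - C lam ∧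
        Irreducible (π.map (Ideal.Quotient.mk (Ideal.span {γ}))) ∧
        P = Ideal.span {Ideal.Quotient.mk (Ideal.span {(X : Polynomial R) ^ n - C lam}) π,
          Ideal.Quotient.mk (Ideal.span {(X : Polynomial R) ^ n - C lam}) (C γ)}) ∧
    (∀ π : Polynomial R, π.Monic → π ∣ X ^ n - C lam →
      Irreducible (π.map (Ideal.Quotient.mk (Ideal.span {γ}))) →
      (Ideal.span {Ideal.Quotient.mk (Ideal.span {(X : Polynomial R) ^ n - C lam}) π,
        Ideal.Quotient.mk (Ideal.span {(X : Polynomial R) ^ n - C lam}) (C γ)}).IsMaximal) := by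
  classical
  haveI := hmax
  letI : Field (R ⧸ Ideal.span {γ}) := Ideal.Quotient.field _
  set mk' := Ideal.Quotient.mk (Ideal.span {γ}) with hmk'
  set I : Ideal (Polynomial R) := Ideal.span {(X : Polynomial R) ^ n - C lam} with hIdef
  set mkq := Ideal.Quotient.mk I with hmkq
  have hfmonic : ((X : Polynomial R) ^ n - C lam).Monic := monic_X_pow_sub_C lam hn.ne'
  have hgbar : ((X : Polynomial R) ^ n - C lam).map mk' = X ^ n - C (mk' lam) := by
    simp [Polynomial.map_sub, Polynomial.map_pow]
  have part2 : ∀ π : Polynomial R, π.Monic → π ∣ X ^ n - C lam →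
      Irreducible (π.map mk') → (Ideal.span {mkq π, mkq (C γ)}).IsMaximal :=
    fun π h1 h2 h3 => span_pi_gamma_isMaximal γ hmax lam hn h1 h2 h3
  refine ⟨?_, part2⟩
  intro P hP
  set Q := P.comap mkq with hQdef
  haveI hQprime : Q.IsPrime := hP.comap mkq
  have hCγQ : C γ ∈ Q := by
    have hz : (mkq (C γ)) ^ e = 0 := by
      rw [← map_pow, ← C_pow, he, C_0, map_zero]
    exact hP.mem_of_pow_mem e (hz ▸ P.zero_mem)
  have hfQ : (X : Polynomial R) ^ n - C lam ∈ Q := by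
    show mkq _ ∈ P
    have : mkq ((X : Polynomial R) ^ n - C lam) = 0 :=
      Ideal.Quotient.eq_zero_iff_mem.mpr (Ideal.subset_span rfl)
    rw [this]; exact P.zero_mem
  have hkerle : RingHom.ker (mapRingHom mk') ≤ Q := by
    rw [ker_polyMap_span, Ideal.span_le, Set.singleton_subset_iff]
    exact hCγQ
  have hmapsurj : Function.Surjective (mapRingHom mk') :=
    Polynomial.map_surjective mk' Ideal.Quotient.mk_surjective
  set Qb := Q.map (mapRingHom mk') with hQbdef
  haveI hQbprime : Qb.IsPrime := Ideal.map_isPrime_of_surjective hmapsurj hkerle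
  have hQcomap : Q = Qb.comap (mapRingHom mk') := by
    rw [hQbdef, Ideal.comap_map_of_surjective _ hmapsurj, ← RingHom.ker_eq_comap_bot,
      sup_eq_left.mpr hkerle]
  have hgQb : (X : (R ⧸ Ideal.span {γ})[X]) ^ n - C (mk' lam) ∈ Qb := by
    rw [← hgbar]
    exact Ideal.mem_map_of_mem _ hfQ
  have hgne : (X : (R ⧸ Ideal.span {γ})[X]) ^ n - C (mk' lam) ≠ 0 :=
    (monic_X_pow_sub_C _ hn.ne').ne_zero
  obtain ⟨g₀, hg₀⟩ := (IsPrincipalIdealRing.principal Qb).principal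
  have hg₀' : Qb = Ideal.span {g₀} := hg₀
  have hg₀ne : g₀ ≠ 0 := by
    rintro rfl
    rw [hg₀', Ideal.span_singleton_eq_bot.mpr rfl] at hgQb
    exact hgne (Ideal.mem_bot.mp hgQb)
  have hg₀prime : Prime g₀ := (Ideal.span_singleton_prime hg₀ne).mp (hg₀' ▸ hQbprime)
  set πb := normalize g₀ with hπbdef
  have hπbmonic : πb.Monic := monic_normalize hg₀ne
  have hπbirr : Irreducible πb :=
    (associated_normalize g₀).irreducible hg₀prime.irreducible
  have hspan : Qb = Ideal.span {πb} :=
    hg₀'.trans (Ideal.span_singleton_eq_span_singleton.mpr (associated_normalize g₀))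
  have hπbdvd : πb ∣ (X : (R ⧸ Ideal.span {γ})[X]) ^ n - C (mk' lam) :=
    Ideal.mem_span_singleton.mp (hspan ▸ hgQb)
  obtain ⟨cb, hcb⟩ := hπbdvd
  -- separability and coprimality
  have hKchar : (n : R ⧸ Ideal.span {γ}) ≠ 0 := by
    intro h0
    have hdvd : p ∣ n := hp ▸ ringChar.dvd h0
    have hone : p = 1 := Nat.eq_one_of_dvd_one (hcop ▸ Nat.dvd_gcd hdvd dvd_rfl)
    exact CharP.ringChar_ne_one (R := R ⧸ Ideal.span {γ}) (hp ▸ hone)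
  have hlamne : mk' lam ≠ 0 := (hlam.map mk').ne_zero
  have hsq : Squarefree ((X : (R ⧸ Ideal.span {γ})[X]) ^ n - C (mk' lam)) :=
    (separable_X_pow_sub_C _ hKchar hlamne).squarefree
  have hco : IsCoprime πb cb := by
    rw [hπbirr.coprime_iff_not_dvd]
    intro hdvd2
    have : πb * πb ∣ (X : (R ⧸ Ideal.span {γ})[X]) ^ n - C (mk' lam) := by
      rw [hcb]; exact mul_dvd_mul_left _ hdvd2
    exact hπbirr.not_isUnit (hsq πb this)
  have hfab : ((X : Polynomial R) ^ n - C lam).map mk' = πb * cb := by rw [hgbar, hcb]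
  obtain ⟨π, b, hπmonic, hπmap, hbmap, hfeq⟩ := hensel_lift γ he0 he hfmonic hπbmonic hco hfab
  have hπdvd : π ∣ (X : Polynomial R) ^ n - C lam := ⟨b, hfeq⟩
  have hπirr : Irreducible (π.map mk') := by rw [hπmap]; exact hπbirr
  refine ⟨π, hπmonic, hπdvd, hπirr, ?_⟩
  have hJmax := part2 π hπmonic hπdvd hπirr
  have hπQ : π ∈ Q := by
    rw [hQcomap]
    show mapRingHom mk' π ∈ Qb
    rw [hspan, coe_mapRingHom]
    exact Ideal.mem_span_singleton.mpr (by rw [hπmap])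
  have hle2 : Ideal.span {mkq π, mkq (C γ)} ≤ P := by
    rw [Ideal.span_le]
    rintro x (h | h)
    · subst h; exact hπQ
    · rw [Set.mem_singleton_iff] at h; subst h; exact hCγQ
  exact (hJmax.eq_of_le hP.ne_top hle2).symm
end

section
/- Let R be a finite chain ring with maximal ideal ⟨γ⟩ of nilpotency index i, λ a unit of R, and suppose gcd(n, char K) = 1 where K is the residue field. If x^n − λ has exactly b monic basic irreducible divisors π^1, …, π^b in R[x], then every ideal of R[x]/⟨x^n − λ⟩ can be written uniquely as Π_{l=1}^b ⟨π^l(x), γ^{m_l}⟩ with 0 ≤ m_l ≤ i; in particular R[x]/⟨x^n − λ⟩ has exactly (i+1)^b distinct ideals. -/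
open Polynomial

section ChainAux

variable {A : Type*} [CommRing A]

lemma my_isUnit_of_not_mem_span {t : A} (hmax : (Ideal.span {t}).IsMaximal) {i : ℕ}
    (hti : t ^ i = 0) {u : A} (hu : u ∉ Ideal.span {t}) : IsUnit u := by
  obtain ⟨y, c, hc, h1⟩ := hmax.exists_inv hu
  rw [Ideal.mem_span_singleton] at hc
  obtain ⟨d, rfl⟩ := hc
  have hnil : IsNilpotent (t * d) := ⟨i, by rw [mul_pow, hti, zero_mul]⟩
  have : IsUnit (y * u) := by
    have he : y * u = 1 - t * d := by linear_combination h1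
    rw [he]; exact hnil.isUnit_one_sub
  exact isUnit_of_mul_isUnit_right this

lemma my_ideal_eq_span_pow {t : A} (hmax : (Ideal.span {t}).IsMaximal) {i : ℕ}
    (hti : t ^ i = 0) (J : Ideal A) : ∃ m ≤ i, J = Ideal.span {t ^ m} := by
  by_cases H : ∃ k ≤ i, ¬ J ≤ Ideal.span {t ^ k}
  · have hex : ∃ k, ¬ J ≤ Ideal.span {t ^ k} := H.imp fun k hk => hk.2
    classical
    set K := Nat.find hex with hK
    have hKspec : ¬ J ≤ Ideal.span {t ^ K} := Nat.find_spec hex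
    have hK0 : K ≠ 0 := by
      intro h0
      apply hKspec
      rw [h0, pow_zero, Ideal.span_singleton_one]
      exact le_top
    have hKle : K ≤ i := by
      obtain ⟨k, hk, hk2⟩ := H
      exact le_trans (Nat.find_min' hex hk2) hk
    have hprev : J ≤ Ideal.span {t ^ (K - 1)} := by
      by_contra hc
      exact absurd (Nat.find_min' hex hc) (by omega)
    obtain ⟨a, haJ, hanot⟩ := SetLike.not_le_iff_exists.mp hKspec
    obtain ⟨u, rfl⟩ := Ideal.mem_span_singleton.mp (hprev haJ)
    have hu : u ∉ Ideal.span {t} := by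
      intro hu
      obtain ⟨w, rfl⟩ := Ideal.mem_span_singleton.mp hu
      apply hanot
      rw [Ideal.mem_span_singleton]
      have hKK : t ^ (K - 1) * t = t ^ K := by
        rw [← pow_succ]; congr 1; omega
      exact ⟨w, by rw [← hKK]; ring⟩
    have huu : IsUnit u := my_isUnit_of_not_mem_span hmax hti hu
    refine ⟨K - 1, by omega, le_antisymm hprev ?_⟩
    rw [Ideal.span_singleton_le_iff_mem]
    obtain ⟨v, hv⟩ := huu.exists_right_inv
    have : t ^ (K - 1) = (t ^ (K - 1) * u) * v := by
      rw [mul_assoc, hv, mul_one]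
    rw [this]
    exact Ideal.mul_mem_right _ _ haJ
  · push_neg at H
    refine ⟨i, le_rfl, ?_⟩
    have : J ≤ Ideal.span {t ^ i} := H i le_rfl
    rw [hti, Ideal.span_singleton_eq_bot.mpr rfl] at this ⊢
    exact le_bot_iff.mp this

lemma my_span_pow_ne {t : A} {i : ℕ} (hti : t ^ i = 0) (hti' : t ^ (i - 1) ≠ 0)
    {m m' : ℕ} (hm' : m' ≤ i) (hlt : m < m')
    (h : Ideal.span {t ^ m} = Ideal.span {t ^ m'}) : False := by
  have h1 : t ^ m ∈ Ideal.span {t ^ m'} := h ▸ Ideal.mem_span_singleton_self _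
  obtain ⟨c, hc⟩ := Ideal.mem_span_singleton.mp h1
  have hi0 : 0 < i := lt_of_lt_of_le (Nat.lt_of_le_of_lt (Nat.zero_le m) hlt) hm'
  set z := t * (t ^ (m' - m - 1) * c) with hz
  have hm'eq : t ^ m' = t ^ (m + 1) * t ^ (m' - m - 1) := by
    rw [← pow_add]; congr 1; omega
  have hd : t ^ m = t ^ m * z := by
    conv_lhs => rw [hc]
    rw [hz, hm'eq, pow_succ]; ring
  have hnil : IsNilpotent z := ⟨i, by rw [hz, mul_pow, hti, zero_mul]⟩
  have hzero : t ^ m * (1 - z) = 0 := by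
    rw [mul_sub, mul_one, ← hd, sub_self]
  have htm : t ^ m = 0 := by
    obtain ⟨v, hv⟩ := hnil.isUnit_one_sub.exists_right_inv
    calc t ^ m = t ^ m * ((1 - z) * v) := by rw [hv, mul_one]
    _ = (t ^ m * (1 - z)) * v := by ring
    _ = 0 := by rw [hzero, zero_mul]
  apply hti'
  rw [show i - 1 = m + (i - 1 - m) by omega, pow_add, htm, zero_mul]

end ChainAux

section LatticeAux

variable {A : Type*} [CommRing A] {ι : Type*}

lemma my_sup_inf_sup (I Q1 Q2 : Ideal A) (h : Q1 ⊔ Q2 = ⊤) :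
    (I ⊔ Q1) ⊓ (I ⊔ Q2) = I ⊔ (Q1 ⊓ Q2) := by
  refine le_antisymm ?_ (le_inf (sup_le_sup_left inf_le_left I) (sup_le_sup_left inf_le_right I))
  intro x hx
  obtain ⟨hx1, hx2⟩ := hx
  obtain ⟨u, hu, v, hv, huv⟩ := Submodule.mem_sup.mp ((Ideal.eq_top_iff_one _).mp h)
  obtain ⟨a1, ha1, q1, hq1, hxe1⟩ := Submodule.mem_sup.mp hx1
  obtain ⟨a2, ha2, q2, hq2, hxe2⟩ := Submodule.mem_sup.mp hx2
  have : x = (a2 * u + a1 * v) + (q2 * u + q1 * v) := by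
    linear_combination (-u) * hxe2 + (-v) * hxe1 + (-x) * huv
  rw [this]
  refine Submodule.add_mem_sup (Ideal.add_mem _ (Ideal.mul_mem_right _ _ ha2)
    (Ideal.mul_mem_right _ _ ha1)) (Ideal.add_mem _ ?_ ?_)
  · exact ⟨Ideal.mul_mem_left _ _ hu, Ideal.mul_mem_right _ _ hq2⟩
  · exact ⟨Ideal.mul_mem_right _ _ hq1, Ideal.mul_mem_left _ _ hv⟩

lemma my_inf_sup_eq [DecidableEq ι] (I : Ideal A) (s : Finset ι) (Q : ι → Ideal A)
    (h : ∀ l ∈ s, ∀ m ∈ s, l ≠ m → Q l ⊔ Q m = ⊤) :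
    (⨅ l ∈ s, (I ⊔ Q l)) = I ⊔ ⨅ l ∈ s, Q l := by
  induction s using Finset.induction_on with
  | empty => simp
  | insert _ _ ha ih =>
    rename_i a s
    rw [Finset.iInf_insert, Finset.iInf_insert,
      ih (fun l hl m hm hlm => h l (Finset.mem_insert_of_mem hl) m (Finset.mem_insert_of_mem hm) hlm),
      my_sup_inf_sup]
    exact Ideal.sup_iInf_eq_top fun l hl =>
      h a (Finset.mem_insert_self a s) l (Finset.mem_insert_of_mem hl)
        (fun he => ha (he ▸ hl))

lemma my_prod_eq_inf [DecidableEq ι] (s : Finset ι) (Q : ι → Ideal A)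
    (h : ∀ l ∈ s, ∀ m ∈ s, l ≠ m → Q l ⊔ Q m = ⊤) :
    (∏ l ∈ s, Q l) = ⨅ l ∈ s, Q l := by
  induction s using Finset.induction_on with
  | empty => simp
  | insert _ _ ha ih =>
    rename_i a s
    rw [Finset.prod_insert ha, Finset.iInf_insert,
      ← ih (fun l hl m hm hlm => h l (Finset.mem_insert_of_mem hl) m (Finset.mem_insert_of_mem hm) hlm),
      Ideal.mul_eq_inf_of_coprime]
    exact Ideal.sup_prod_eq_top fun l hl =>
      h a (Finset.mem_insert_self a s) l (Finset.mem_insert_of_mem hl)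
        (fun he => ha (he ▸ hl))

end LatticeAux

section MaxAux

variable {R : Type*} [CommRing R]

lemma my_span_quot_max (γ : R) (hmax : (Ideal.span {γ} : Ideal R).IsMaximal)
    (g : Polynomial R) (hirr : Irreducible (g.map (Ideal.Quotient.mk (Ideal.span {γ})))) :
    (Ideal.span {Ideal.Quotient.mk (Ideal.span {g}) (C γ)}).IsMaximal := by
  haveI := hmax
  letI : Field (R ⧸ Ideal.span {γ}) := Ideal.Quotient.field _
  set σ : Polynomial R →+* Polynomial (R ⧸ Ideal.span {γ}) :=
    Polynomial.mapRingHom (Ideal.Quotient.mk (Ideal.span {γ}))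
  have hσ : Function.Surjective σ := Polynomial.map_surjective _ Ideal.Quotient.mk_surjective
  have hMmax : (Ideal.span {g.map (Ideal.Quotient.mk (Ideal.span {γ}))}).IsMaximal :=
    PrincipalIdealRing.isMaximal_of_irreducible hirr
  haveI := hMmax
  have hNmax : (Ideal.comap σ (Ideal.span {g.map (Ideal.Quotient.mk (Ideal.span {γ}))})).IsMaximal :=
    Ideal.comap_isMaximal_of_surjective σ hσ
  have hker : RingHom.ker σ = Ideal.span {C γ} := by
    rw [Polynomial.ker_mapRingHom, Ideal.mk_ker, Ideal.map_span, Set.image_singleton]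
  have hN : Ideal.comap σ (Ideal.span {g.map (Ideal.Quotient.mk (Ideal.span {γ}))})
      = Ideal.span {g} ⊔ Ideal.span {C γ} := by
    apply le_antisymm
    · intro x hx
      rw [Ideal.mem_comap, Ideal.mem_span_singleton] at hx
      obtain ⟨c', hc'⟩ := hx
      obtain ⟨c, rfl⟩ := hσ c'
      have hc2 : σ x = σ g * σ c := hc'
      have hker' : x - g * c ∈ Ideal.span {C γ} := by
        rw [← hker, RingHom.mem_ker, map_sub, map_mul, ← hc2, sub_self]
      have hx2 : x = g * c + (x - g * c) := by ring
      rw [hx2]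
      exact Submodule.add_mem_sup (Ideal.mem_span_singleton.mpr ⟨c, rfl⟩) hker'
    · refine sup_le ?_ ?_ <;> rw [Ideal.span_singleton_le_iff_mem, Ideal.mem_comap]
      · exact Ideal.mem_span_singleton_self _
      · have h0 : σ (C γ) = 0 := by
          rw [Polynomial.coe_mapRingHom, Polynomial.map_C,
            Ideal.Quotient.eq_zero_iff_mem.mpr (Ideal.mem_span_singleton_self γ), map_zero]
        rw [h0]
        exact Ideal.zero_mem _
  haveI hsupmax : (Ideal.span {g} ⊔ Ideal.span {C γ} : Ideal (Polynomial R)).IsMaximal :=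
    hN ▸ hNmax
  have hmapN : (Ideal.span {g} ⊔ Ideal.span {C γ}).map (Ideal.Quotient.mk (Ideal.span {g}))
      = Ideal.span {Ideal.Quotient.mk (Ideal.span {g}) (C γ)} := by
    rw [Ideal.map_sup, Ideal.map_span, Ideal.map_span, Set.image_singleton, Set.image_singleton,
      Ideal.Quotient.eq_zero_iff_mem.mpr (Ideal.mem_span_singleton_self g),
      Ideal.span_singleton_eq_bot.mpr rfl, bot_sup_eq]
  rcases Ideal.map_eq_top_or_isMaximal_of_surjective (Ideal.Quotient.mk (Ideal.span {g}))
      Ideal.Quotient.mk_surjective hsupmax with htop | hm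
  · exfalso
    have := congrArg (Ideal.comap (Ideal.Quotient.mk (Ideal.span {g}))) htop
    rw [Ideal.comap_map_of_surjective _ Ideal.Quotient.mk_surjective, Ideal.comap_top] at this
    have hkerle : Ideal.comap (Ideal.Quotient.mk (Ideal.span {g})) ⊥ ≤
        Ideal.span {g} ⊔ Ideal.span {C γ} := by
      rw [← RingHom.ker_eq_comap_bot, Ideal.mk_ker]
      exact le_sup_left
    rw [sup_eq_left.mpr hkerle] at this
    exact hsupmax.ne_top this
  · rw [hmapN] at hm
    exact hm

end MaxAux

section DegAux

variable {R : Type*} [CommRing R]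

lemma my_C_not_mem_span (g : Polynomial R) (hg : g.Monic) (hdeg : 0 < g.natDegree)
    {c : R} (hc : c ≠ 0) : C c ∉ Ideal.span {g} := by
  intro hmem
  obtain ⟨q, hq⟩ := Ideal.mem_span_singleton.mp hmem
  have hq0 : q ≠ 0 := by
    rintro rfl
    rw [mul_zero] at hq
    exact hc (Polynomial.C_eq_zero.mp hq)
  have := hg.natDegree_mul' hq0
  rw [← hq, Polynomial.natDegree_C] at this
  omega

end DegAux

/-- Let `R` be a finite chain ring with maximal ideal `⟨γ⟩` of nilpotency index `i` and
residue field `K` with `gcd(n, char K) = 1`, `λ` a unit of `R`.  If `x^n − λ` has exactly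
`b` monic basic irreducible (pairwise coprime) divisors `π^1, …, π^b` in `R[x]`, then every
ideal of `R[x]/⟨x^n − λ⟩` is uniquely `Π_{l=1}^b ⟨π^l(x), γ^{m_l}⟩` with `0 ≤ m_l ≤ i`;
in particular `R[x]/⟨x^n − λ⟩` has exactly `(i+1)^b` ideals. -/
theorem ideals_of_constacyclic_ambient (R : Type*) [CommRing R] [Finite R] [Nontrivial R]
    (hchain : ∀ I J : Ideal R, I ≤ J ∨ J ≤ I)
    (γ : R) (hmax : (Ideal.span {γ} : Ideal R).IsMaximal)
    (i : ℕ) (hi0 : 0 < i) (hi : γ ^ i = 0) (hi' : γ ^ (i - 1) ≠ 0)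
    (p : ℕ) (hp : p = ringChar (R ⧸ Ideal.span {γ}))
    (lam : R) (hlam : IsUnit lam) (n : ℕ) (hn : 0 < n) (hcop : Nat.Coprime n p)
    (b : ℕ) (π : Fin b → Polynomial R)
    (hmonic : ∀ l, (π l).Monic)
    (hbasic : ∀ l, Irreducible ((π l).map (Ideal.Quotient.mk (Ideal.span {γ}))))
    (hcoprime : ∀ l m, l ≠ m → IsCoprime (π l) (π m))
    (hprod : (∏ l, π l) = X ^ n - C lam) :
    (∀ I : Ideal (Polynomial R ⧸ Ideal.span {(X : Polynomial R) ^ n - C lam}),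
      ∃! m : Fin b → Fin (i + 1),
        I = ∏ l, Ideal.span
          {Ideal.Quotient.mk (Ideal.span {(X : Polynomial R) ^ n - C lam}) (π l),
           (Ideal.Quotient.mk (Ideal.span {(X : Polynomial R) ^ n - C lam}) (C γ)) ^
             (m l : ℕ)}) ∧
    Nat.card (Ideal (Polynomial R ⧸ Ideal.span {(X : Polynomial R) ^ n - C lam})) =
      (i + 1) ^ b := by
  classical
  haveI := hmax
  set f : Polynomial R := X ^ n - C lam with hf
  set SP : Ideal (Polynomial R) := Ideal.span {f} with hSP
  set φ := Ideal.Quotient.mk SP with hφ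
  set t : Polynomial R ⧸ SP := φ (C γ) with ht
  -- divisibility
  have hdvd : ∀ l, π l ∣ f := fun l => hprod ▸ Finset.dvd_prod_of_mem π (Finset.mem_univ l)
  -- quotient maps to the local factors
  set ψ : ∀ l : Fin b, (Polynomial R ⧸ SP) →+* (Polynomial R ⧸ Ideal.span {π l}) := fun l =>
    Ideal.Quotient.lift SP (Ideal.Quotient.mk (Ideal.span {π l})) (fun a ha => by
      rw [Ideal.Quotient.eq_zero_iff_mem]
      exact Ideal.span_singleton_le_span_singleton.mpr (hdvd l) ha) with hψ
  have hψφ : ∀ l x, ψ l (φ x) = Ideal.Quotient.mk (Ideal.span {π l}) x := fun l x => rfl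
  have hsurj : ∀ l, Function.Surjective (ψ l) := by
    intro l y
    obtain ⟨x, rfl⟩ := Ideal.Quotient.mk_surjective y
    exact ⟨φ x, rfl⟩
  set tl : ∀ l : Fin b, Polynomial R ⧸ Ideal.span {π l} :=
    fun l => Ideal.Quotient.mk (Ideal.span {π l}) (C γ) with htl
  have hψt : ∀ l, ψ l t = tl l := fun l => rfl
  set Q : Fin b → Ideal (Polynomial R ⧸ SP) := fun l => Ideal.span {φ (π l)} with hQ
  -- kernels
  have hker : ∀ l, RingHom.ker (ψ l) = Q l := by
    intro l
    apply le_antisymm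
    · intro x hx
      obtain ⟨y, rfl⟩ := Ideal.Quotient.mk_surjective (I := SP) x
      rw [RingHom.mem_ker, hψφ, Ideal.Quotient.eq_zero_iff_mem] at hx
      obtain ⟨c, rfl⟩ := Ideal.mem_span_singleton.mp hx
      rw [show (Ideal.Quotient.mk SP) (π l * c) = φ (π l) * φ c from map_mul φ _ _]
      exact Ideal.mul_mem_right _ _ (Ideal.mem_span_singleton_self _)
    · rw [Ideal.span_singleton_le_iff_mem, RingHom.mem_ker, hψφ]
      exact Ideal.Quotient.eq_zero_iff_mem.mpr (Ideal.mem_span_singleton_self _)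
  -- comaximality
  have hcomax : ∀ l m : Fin b, l ≠ m → Q l ⊔ Q m = ⊤ := by
    intro l m h
    rw [← Ideal.isCoprime_iff_sup_eq, Ideal.isCoprime_span_singleton_iff]
    exact (hcoprime l m h).map φ
  -- the infimum of the kernels is ⊥
  have hinf : (⨅ l ∈ Finset.univ, Q l) = (⊥ : Ideal (Polynomial R ⧸ SP)) := by
    rw [← my_prod_eq_inf Finset.univ Q (fun l _ m _ h => hcomax l m h), hQ,
      Ideal.prod_span_singleton, ← map_prod, hprod]
    rw [Ideal.span_singleton_eq_bot]
    exact Ideal.Quotient.eq_zero_iff_mem.mpr (Ideal.mem_span_singleton_self _)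
  -- local chain structure in each factor
  have hmaxl : ∀ l, (Ideal.span {tl l}).IsMaximal := fun l =>
    my_span_quot_max γ hmax (π l) (hbasic l)
  have htli : ∀ l, tl l ^ i = 0 := by
    intro l
    rw [htl]
    rw [← map_pow, ← map_pow, hi, map_zero, map_zero]
  have hdeg : ∀ l, 0 < (π l).natDegree := by
    intro l
    letI : Field (R ⧸ Ideal.span {γ}) := Ideal.Quotient.field _
    have h1 := (hbasic l).natDegree_pos
    rwa [(hmonic l).natDegree_map] at h1
  have htli' : ∀ l, tl l ^ (i - 1) ≠ 0 := by
    intro l h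
    rw [htl, ← map_pow, ← map_pow, Ideal.Quotient.eq_zero_iff_mem] at h
    exact my_C_not_mem_span (π l) (hmonic l) (hdeg l) hi' h
  -- the span of the pair
  have hA : ∀ (l : Fin b) (k : ℕ),
      Ideal.span {φ (π l), t ^ k} = Q l ⊔ Ideal.span {t ^ k} := by
    intro l k
    rw [Ideal.span_insert]
  have hAcomax : ∀ (l l' : Fin b) (k k' : ℕ), l ≠ l' →
      (Q l ⊔ Ideal.span {t ^ k}) ⊔ (Q l' ⊔ Ideal.span {t ^ k'}) = ⊤ := by
    intro l l' k k' h
    rw [eq_top_iff, ← hcomax l l' h]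
    exact sup_le (le_sup_of_le_left le_sup_left) (le_sup_of_le_right le_sup_left)
  -- maps and comaps of the basic ideals
  have hmapt : ∀ (l : Fin b) (k : ℕ),
      Ideal.map (ψ l) (Ideal.span {t ^ k}) = Ideal.span {tl l ^ k} := by
    intro l k
    rw [Ideal.map_span, Set.image_singleton, map_pow, hψt]
  have hcomapt : ∀ (l : Fin b) (k : ℕ),
      Ideal.comap (ψ l) (Ideal.span {tl l ^ k}) = Q l ⊔ Ideal.span {t ^ k} := by
    intro l k
    rw [← hmapt l k, Ideal.comap_map_of_surjective _ (hsurj l),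
      ← RingHom.ker_eq_comap_bot, hker l, sup_comm]
  have hIcomap : ∀ (I : Ideal (Polynomial R ⧸ SP)) (l : Fin b),
      Ideal.comap (ψ l) (Ideal.map (ψ l) I) = I ⊔ Q l := by
    intro I l
    rw [Ideal.comap_map_of_surjective _ (hsurj l), ← RingHom.ker_eq_comap_bot, hker l]
  have hmapQ : ∀ l, Ideal.map (ψ l) (Q l) = ⊥ := by
    intro l
    rw [hQ, Ideal.map_span, Set.image_singleton, hψφ, Ideal.span_singleton_eq_bot]
    exact Ideal.Quotient.eq_zero_iff_mem.mpr (Ideal.mem_span_singleton_self _)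
  -- the product ideal associated to exponents
  have hFinf : ∀ k : Fin b → ℕ,
      (∏ l, Ideal.span {φ (π l), t ^ (k l)})
        = ⨅ l ∈ Finset.univ, (Q l ⊔ Ideal.span {t ^ (k l)}) := by
    intro k
    simp only [hA]
    exact my_prod_eq_inf Finset.univ _ (fun l _ l' _ h => hAcomax l l' _ _ h)
  have hFsup : ∀ (k : Fin b → ℕ) (l : Fin b),
      Q l ⊔ (∏ l', Ideal.span {φ (π l'), t ^ (k l')}) = Q l ⊔ Ideal.span {t ^ (k l)} := by
    intro k l
    rw [hFinf k, ← my_inf_sup_eq (Q l) Finset.univ _ (fun l' _ l'' _ h => hAcomax l' l'' _ _ h)]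
    apply le_antisymm
    · refine le_trans (iInf₂_le l (Finset.mem_univ l)) ?_
      rw [← sup_assoc, sup_idem]
    · apply le_iInf₂
      intro l' _
      by_cases h : l' = l
      · subst h
        exact sup_le le_sup_left (le_sup_of_le_right le_sup_right)
      · have htop : Q l ⊔ (Q l' ⊔ Ideal.span {t ^ (k l')}) = ⊤ := by
          rw [eq_top_iff, ← hcomax l l' (Ne.symm h)]
          exact sup_le_sup_left le_sup_left _
        rw [htop]
        exact le_top
  have hmapF : ∀ (k : Fin b → ℕ) (l : Fin b),
      Ideal.map (ψ l) (∏ l', Ideal.span {φ (π l'), t ^ (k l')})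
        = Ideal.span {tl l ^ (k l)} := by
    intro k l
    have h1 : Ideal.map (ψ l) (Q l ⊔ (∏ l', Ideal.span {φ (π l'), t ^ (k l')}))
        = Ideal.map (ψ l) (Q l ⊔ Ideal.span {t ^ (k l)}) := by rw [hFsup k l]
    rw [Ideal.map_sup, Ideal.map_sup, hmapQ, bot_sup_eq, bot_sup_eq, hmapt] at h1
    exact h1
  have key : ∀ I : Ideal (Polynomial R ⧸ SP),
      ∃! m : Fin b → Fin (i + 1), I = ∏ l, Ideal.span {φ (π l), t ^ (m l : ℕ)} := by
    intro I
    have hch := fun l => my_ideal_eq_span_pow (hmaxl l) (htli l) (Ideal.map (ψ l) I)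
    choose m0 hm0 hspan using hch
    refine ⟨fun l => ⟨m0 l, by have := hm0 l; omega⟩, ?_, ?_⟩
    · have hIeq : ∀ l : Fin b, I ⊔ Q l = Q l ⊔ Ideal.span {t ^ (m0 l)} := by
        intro l
        rw [← hIcomap I l, hspan l, hcomapt]
      have hcalc : I = ∏ l, Ideal.span {φ (π l), t ^ (m0 l)} := by
        calc I = I ⊔ ⊥ := by rw [sup_bot_eq]
          _ = I ⊔ ⨅ l ∈ Finset.univ, Q l := by rw [hinf]
          _ = ⨅ l ∈ Finset.univ, (I ⊔ Q l) :=
              (my_inf_sup_eq I Finset.univ Q (fun l _ l' _ h => hcomax l l' h)).symm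
          _ = ⨅ l ∈ Finset.univ, (Q l ⊔ Ideal.span {t ^ (m0 l)}) := by simp only [hIeq]
          _ = ∏ l, Ideal.span {φ (π l), t ^ (m0 l)} := (hFinf (fun l => m0 l)).symm
      exact hcalc
    · intro m' hm'
      funext l
      have h1 : Ideal.map (ψ l) I = Ideal.span {tl l ^ (m' l : ℕ)} := by
        rw [hm', hmapF (fun l' => (m' l' : ℕ)) l]
      rw [hspan l] at h1
      have hval : (m' l : ℕ) = m0 l := by
        rcases lt_trichotomy ((m' l : ℕ)) (m0 l) with h | h | h
        · exact absurd (my_span_pow_ne (htli l) (htli' l) (hm0 l) h h1.symm) not_false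
        · exact h
        · exact absurd (my_span_pow_ne (htli l) (htli' l) (Fin.is_le (m' l)) h h1) not_false
      exact Fin.ext hval
  refine ⟨key, ?_⟩
  have hbij : Function.Bijective
      (fun m : Fin b → Fin (i + 1) => ∏ l, Ideal.span {φ (π l), t ^ (m l : ℕ)}) := by
    constructor
    · intro m m' h
      exact ((key (∏ l, Ideal.span {φ (π l), t ^ (m l : ℕ)})).unique rfl h)
    · intro I
      obtain ⟨m, hm, -⟩ := key I
      exact ⟨m, hm.symm⟩
  rw [← Nat.card_eq_of_bijective _ hbij, Nat.card_fun, Nat.card_eq_fintype_card,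
    Nat.card_eq_fintype_card, Fintype.card_fin, Fintype.card_fin]
end
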